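/- Generalized Gårding inequality (abstract form): let H be a Hilbert space, B : H × H → R a bounded symmetric bilinear form, Ξ : H → H a Banach-space isomorphism, and suppose there exist a constant C > 0 and a compact bilinear form K such that |B(Ξ a, a) + K(a,a)| ≥ C‖a‖² for all a ∈ H. Then the bounded operator T : H → H' induced by B is Fredholm of index 0. -/

import Mathlib

noncomputable section

set_option linter.unusedSectionVars false

open Metric Set

local notation "⟪" x ", " y "⟫" => @inner ℝ _ _ x y

section Aux

variable {H : Type*} [NormedAddCommGroup H] [InnerProductSpace ℝ H] [CompleteSpace H]

lemma aux_ker_findim (D : H →L[ℝ] H) (hD : IsCompactOperator (D : H → H)) :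
    FiniteDimensional ℝ (LinearMap.ker ((ContinuousLinearMap.id ℝ H - D : H →L[ℝ] H) : H →ₗ[ℝ] H)) := by
  set f : H →L[ℝ] H := ContinuousLinearMap.id ℝ H - D with hf
  set N : Submodule ℝ H := LinearMap.ker (f : H →ₗ[ℝ] H) with hN
  have hfix : ∀ x : H, x ∈ N → D x = x := by
    intro x hx
    have hx0 : f x = 0 := hx
    have h1 : x - D x = 0 := by simpa [hf] using hx0
    exact (sub_eq_zero.mp h1).symm
  obtain ⟨Kc, hKc, hKim⟩ := hD.image_closedBall_subset_compact 1
  have hNclosed : IsClosed (N : Set H) := ContinuousLinearMap.isClosed_ker f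
  have hX : IsCompact ((N : Set H) ∩ closedBall 0 1) := by
    refine hKc.of_isClosed_subset (hNclosed.inter isClosed_closedBall) ?_
    rintro x ⟨hxN, hx1⟩
    exact hKim ⟨x, hx1, hfix x hxN⟩
  have himg : (Subtype.val '' closedBall (0 : N) 1) = (N : Set H) ∩ closedBall 0 1 := by
    ext x
    constructor
    · rintro ⟨y, hy, rfl⟩
      refine ⟨y.2, ?_⟩
      simpa [mem_closedBall_zero_iff] using mem_closedBall_zero_iff.mp hy
    · rintro ⟨hxN, hx1⟩
      exact ⟨⟨x, hxN⟩, by simpa [mem_closedBall_zero_iff] using mem_closedBall_zero_iff.mp hx1, rfl⟩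
  have hcpt : IsCompact (closedBall (0 : N) 1) := by
    rw [Topology.IsEmbedding.subtypeVal.isCompact_iff, himg]
    exact hX
  exact FiniteDimensional.of_isCompact_closedBall₀ (𝕜 := ℝ) one_pos hcpt

lemma aux_range_closed (D : H →L[ℝ] H) (hD : IsCompactOperator (D : H → H)) :
    IsClosed (Set.range (ContinuousLinearMap.id ℝ H - D) : Set H) := by
  set f : H →L[ℝ] H := ContinuousLinearMap.id ℝ H - D with hf
  set N : Submodule ℝ H := LinearMap.ker (f : H →ₗ[ℝ] H) with hN
  haveI : FiniteDimensional ℝ N := aux_ker_findim D hD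
  set M : Submodule ℝ H := Nᗮ with hM
  have hMclosed : IsClosed (M : Set H) := Submodule.isClosed_orthogonal N
  haveI : CompleteSpace M := hMclosed.completeSpace_coe
  -- key lower bound on M
  have key : ∃ c : ℝ, 0 < c ∧ ∀ x ∈ M, c * ‖x‖ ≤ ‖f x‖ := by
    by_contra hcon
    push_neg at hcon
    have hseq : ∀ n : ℕ, ∃ u : H, u ∈ M ∧ ‖u‖ = 1 ∧ ‖f u‖ < 1 / (n + 1) := by
      intro n
      obtain ⟨x, hxM, hx⟩ := hcon (1 / (n + 1)) (by positivity)
      have hx0 : x ≠ 0 := by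
        rintro rfl
        simp at hx
      refine ⟨‖x‖⁻¹ • x, M.smul_mem _ hxM, ?_, ?_⟩
      · simp [norm_smul, norm_ne_zero_iff.mpr hx0, inv_mul_cancel₀]
      · rw [map_smul, norm_smul, norm_inv, norm_norm]
        calc ‖x‖⁻¹ * ‖f x‖ < ‖x‖⁻¹ * (1 / (n + 1) * ‖x‖) := by
              apply mul_lt_mul_of_pos_left hx
              exact inv_pos.mpr (norm_pos_iff.mpr hx0)
          _ = 1 / (n + 1) := by
              have hxn : (0:ℝ) < ‖x‖ := norm_pos_iff.mpr hx0
              field_simp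
    choose u hM1 h1 hfu using hseq
    obtain ⟨Kc, hKc, hKim⟩ := hD.image_closedBall_subset_compact 1
    have hmem : ∀ n, D (u n) ∈ Kc := fun n =>
      hKim ⟨u n, by simp [mem_closedBall_zero_iff, (h1 n).le], rfl⟩
    obtain ⟨y, hyK, φ, hφ, hconv⟩ := hKc.tendsto_subseq hmem
    have hf0 : Filter.Tendsto (fun n => f (u (φ n))) Filter.atTop (nhds 0) := by
      rw [tendsto_zero_iff_norm_tendsto_zero]
      refine squeeze_zero (fun n => norm_nonneg _) (fun n => ?_) tendsto_one_div_add_atTop_nhds_zero_nat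
      refine (hfu (φ n)).le.trans ?_
      gcongr
      exact_mod_cast hφ.le_apply
    have huconv : Filter.Tendsto (fun n => u (φ n)) Filter.atTop (nhds y) := by
      have heq : (fun n => u (φ n)) = fun n => f (u (φ n)) + D (u (φ n)) := by
        funext n
        simp [hf]
      rw [heq]
      simpa using hf0.add hconv
    have hyM : y ∈ M := hMclosed.mem_of_tendsto huconv (Filter.Eventually.of_forall fun n => hM1 (φ n))
    have hy1 : ‖y‖ = 1 := by
      have := (continuous_norm.tendsto y).comp huconv
      have h2 : Filter.Tendsto (fun n => ‖u (φ n)‖) Filter.atTop (nhds 1) := by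
        simpa [h1] using Filter.tendsto_const_nhds (α := ℝ) (x := 1) (f := Filter.atTop (α := ℕ))
      exact tendsto_nhds_unique this h2
    have hyN : y ∈ N := by
      have hfy : Filter.Tendsto (fun n => f (u (φ n))) Filter.atTop (nhds (f y)) :=
        (f.continuous.tendsto y).comp huconv
      have : f y = 0 := tendsto_nhds_unique hfy hf0
      exact this
    have hy0 : y = 0 := by
      have := (Submodule.mem_orthogonal N y).mp hyM y hyN
      simpa [inner_self_eq_zero] using this
    rw [hy0] at hy1
    norm_num at hy1
  obtain ⟨c, hc, hbound⟩ := key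
  -- range f = f '' M
  have hcompl : IsCompl N M := Submodule.isCompl_orthogonal_of_hasOrthogonalProjection
  have hrange : Set.range (f : H → H) = f '' (M : Set H) := by
    apply Set.Subset.antisymm
    · rintro _ ⟨x, rfl⟩
      have hx : x ∈ N ⊔ M := by
        rw [hcompl.sup_eq_top]
        trivial
      obtain ⟨n, hn, m, hm, rfl⟩ := Submodule.mem_sup.mp hx
      have hfn : f n = 0 := hn
      exact ⟨m, hm, by simp [map_add, hfn]⟩
    · rintro _ ⟨x, _, rfl⟩
      exact ⟨x, rfl⟩
  have himg : f '' (M : Set H) = Set.range (f.comp M.subtypeL) := by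
    ext x
    constructor
    · rintro ⟨z, hz, rfl⟩
      exact ⟨⟨z, hz⟩, rfl⟩
    · rintro ⟨z, rfl⟩
      exact ⟨z, z.2, rfl⟩
  rw [hrange, himg]
  have hanti : AntilipschitzWith ⟨c, hc.le⟩⁻¹ (f.comp M.subtypeL) := by
    apply ContinuousLinearMap.antilipschitz_of_bound
    intro x
    have hb := hbound (x : H) x.2
    have h2 : ‖(x : H)‖ ≤ c⁻¹ * ‖f (x : H)‖ := by
      rw [le_inv_mul_iff₀ hc]
      exact hb
    exact h2
  exact hanti.isClosed_range (f.comp M.subtypeL).uniformContinuous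

lemma aux_fredholm (T : H →L[ℝ] H) (A : H ≃L[ℝ] H) (Cc : H →L[ℝ] H)
    (hCc : IsCompactOperator (Cc : H → H)) (hT : ∀ a, T a = A a - Cc a) :
    FiniteDimensional ℝ (LinearMap.ker (T : H →ₗ[ℝ] H)) ∧ IsClosed (Set.range (T : H → H)) := by
  set D : H →L[ℝ] H := (A.symm : H →L[ℝ] H).comp Cc with hD
  have hDc : IsCompactOperator (D : H → H) := by
    have := hCc.clm_comp (A.symm : H →L[ℝ] H)
    exact this
  set g : H →L[ℝ] H := ContinuousLinearMap.id ℝ H - D with hg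
  have hfact : ∀ a, T a = A (g a) := by
    intro a
    simp [hT, hg, hD, map_sub]
  have hker : LinearMap.ker (T : H →ₗ[ℝ] H) = LinearMap.ker (g : H →ₗ[ℝ] H) := by
    ext x
    simp only [LinearMap.mem_ker, ContinuousLinearMap.coe_coe]
    rw [hfact x]
    constructor
    · intro h
      have := A.injective (by simpa using h)
      simpa using this
    · intro h
      rw [h, map_zero]
  have hrange : Set.range (T : H → H) = A '' Set.range (g : H → H) := by
    ext y
    constructor
    · rintro ⟨x, rfl⟩
      exact ⟨g x, ⟨x, rfl⟩, (hfact x).symm⟩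
    · rintro ⟨z, ⟨x, rfl⟩, rfl⟩
      exact ⟨x, hfact x⟩
  constructor
  · rw [hker]
    exact aux_ker_findim D hDc
  · rw [hrange]
    exact A.toHomeomorph.isClosedMap _ (aux_range_closed D hDc)

lemma aux_dichotomy (W : H →L[ℝ] (H →L[ℝ] ℝ)) (C : ℝ) (hC : 0 < C)
    (h : ∀ a : H, C * ‖a‖ ^ 2 ≤ |W a a|) :
    IsCoercive W ∨ IsCoercive (-W) := by
  have hsq : ∀ (s : ℝ) (b : H), W (s • b) (s • b) = s ^ 2 * W b b := by
    intro s b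
    rw [map_smul]
    simp [smul_eq_mul]
    ring
  by_cases hpos : ∀ a : H, 0 ≤ W a a
  · left
    refine ⟨C, hC, fun u => ?_⟩
    have h1 := h u
    rw [abs_of_nonneg (hpos u)] at h1
    nlinarith [sq_nonneg ‖u‖]
  by_cases hneg : ∀ a : H, W a a ≤ 0
  · right
    refine ⟨C, hC, fun u => ?_⟩
    have h1 := h u
    rw [abs_of_nonpos (hneg u)] at h1
    have : (-W) u u = -(W u u) := rfl
    rw [this]
    nlinarith [sq_nonneg ‖u‖]
  · exfalso
    push_neg at hpos hneg
    obtain ⟨a, ha⟩ := hpos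
    obtain ⟨b, hb⟩ := hneg
    set γ : ℝ → H := fun t => b + t • (a - b) with hγ
    have hγc : Continuous γ := by
      apply continuous_const.add
      exact (continuous_id.smul continuous_const)
    have happ : Continuous fun p : (H →L[ℝ] ℝ) × H => p.1 p.2 :=
      isBoundedBilinearMap_apply.continuous
    have hq : Continuous fun x : H => W x x :=
      happ.comp (W.continuous.prodMk continuous_id)
    have hcont : ContinuousOn (fun t => W (γ t) (γ t)) (Set.Icc 0 1) :=
      (hq.comp hγc).continuousOn
    have hγ0 : γ 0 = b := by simp [hγ]
    have hγ1 : γ 1 = a := by simp [hγ]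
    have hmem : (0:ℝ) ∈ Set.Icc (W (γ 1) (γ 1)) (W (γ 0) (γ 0)) := by
      rw [hγ0, hγ1]
      exact ⟨ha.le, hb.le⟩
    obtain ⟨t, htI, ht0⟩ := intermediate_value_Icc' (by norm_num : (0:ℝ) ≤ 1) hcont hmem
    have ht0' : W (γ t) (γ t) = 0 := ht0
    have hznorm : ‖γ t‖ = 0 := by
      have h1 := h (γ t)
      rw [ht0'] at h1
      simp only [abs_zero] at h1
      have h2 : ‖γ t‖ ^ 2 ≤ 0 := by nlinarith
      have h3 : ‖γ t‖ ^ 2 = 0 := le_antisymm h2 (sq_nonneg _)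
      exact pow_eq_zero_iff (by norm_num) |>.mp h3
    have hz : b + t • (a - b) = 0 := norm_eq_zero.mp hznorm
    have htne : t ≠ 0 := by
      rintro rfl
      simp only [zero_smul, add_zero] at hz
      rw [hz] at hb
      simp at hb
    have h4 : t⁻¹ • b + (a - b) = 0 := by
      have := congrArg (fun x => t⁻¹ • x) hz
      simpa [smul_add, smul_smul, inv_mul_cancel₀ htne] using this
    have ha' : a = (1 - t⁻¹) • b := by
      have h5 : a = b - t⁻¹ • b := by
        have h6 : a - b = -(t⁻¹ • b) := by
          rw [add_comm] at h4
          exact eq_neg_of_add_eq_zero_left h4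
        rw [sub_eq_neg_add]
        exact sub_eq_iff_eq_add.mp h6
      rw [h5, sub_smul, one_smul]
    have hWa : W a a = (1 - t⁻¹) ^ 2 * W b b := by
      rw [ha', hsq]
    nlinarith [sq_nonneg (1 - t⁻¹)]

end Aux

/-- `T` (mapping a Hilbert space to its dual) is Fredholm of index `0`:
finite-dimensional kernel, closed range, finite-dimensional cokernel, and
`dim ker = dim coker`. -/
def FredholmIndexZero {H : Type*} [NormedAddCommGroup H] [InnerProductSpace ℝ H]
    [CompleteSpace H] (T : H →L[ℝ] (H →L[ℝ] ℝ)) : Prop :=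
  FiniteDimensional ℝ (LinearMap.ker (T : H →ₗ[ℝ] (H →L[ℝ] ℝ))) ∧
  IsClosed (Set.range T) ∧
  FiniteDimensional ℝ ((H →L[ℝ] ℝ) ⧸ LinearMap.range (T : H →ₗ[ℝ] (H →L[ℝ] ℝ))) ∧
  Module.finrank ℝ (LinearMap.ker (T : H →ₗ[ℝ] (H →L[ℝ] ℝ)))
    = Module.finrank ℝ ((H →L[ℝ] ℝ) ⧸ LinearMap.range (T : H →ₗ[ℝ] (H →L[ℝ] ℝ)))

/-- Generalized Gårding (T-coercivity) inequality implies Fredholm of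
index zero: `B : H × H → ℝ` a bounded symmetric bilinear form, `Ξ : H ≃ H` an
isomorphism, `K` a compact bilinear form, and `|B(Ξa, a) + K(a,a)| ≥ C‖a‖²` for some
`C > 0`.  Then the operator `T : H → H'`, `(Ta)(c) = B(a,c)`, is Fredholm of index `0`. -/
theorem garding_implies_fredholm_index_zero
    {H : Type*} [NormedAddCommGroup H] [InnerProductSpace ℝ H] [CompleteSpace H]
    (B : H →L[ℝ] (H →L[ℝ] ℝ))
    (hsymm : ∀ a c : H, B a c = B c a)
    (Ξ : H ≃L[ℝ] H)
    (K : H →L[ℝ] (H →L[ℝ] ℝ)) (hK : IsCompactOperator (K : H → (H →L[ℝ] ℝ)))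
    (C : ℝ) (hC : 0 < C)
    (hcoercive : ∀ a : H, C * ‖a‖ ^ 2 ≤ |B (Ξ a) a + K a a|) :
    FredholmIndexZero B := by
  classical
  set J := InnerProductSpace.toDual ℝ H with hJ
  set T' : H →L[ℝ] H := InnerProductSpace.continuousLinearMapOfBilin B with hT'
  have hT'app : ∀ a c : H, ⟪T' a, c⟫ = B a c := fun a c =>
    InnerProductSpace.continuousLinearMapOfBilin_apply B a c
  set W : H →L[ℝ] (H →L[ℝ] ℝ) := B.comp (Ξ : H →L[ℝ] H) + K with hW
  have hWapp : ∀ a c : H, W a c = B (Ξ a) c + K a c := fun a c => rfl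
  have hdich := aux_dichotomy W C hC (by
    intro a
    rw [hWapp]
    exact hcoercive a)
  set Cop : H →L[ℝ] H :=
    InnerProductSpace.continuousLinearMapOfBilin (K.comp (Ξ.symm : H →L[ℝ] H)) with hCop
  have hCopapp : ∀ a c : H, ⟪Cop a, c⟫ = K (Ξ.symm a) c := fun a c =>
    InnerProductSpace.continuousLinearMapOfBilin_apply _ a c
  have hCopc : IsCompactOperator (Cop : H → H) := by
    have h1 : IsCompactOperator ((K : H → (H →L[ℝ] ℝ)) ∘ (Ξ.symm : H →L[ℝ] H)) :=
      hK.comp_clm (Ξ.symm : H →L[ℝ] H)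
    have h2 := h1.clm_comp
      (((InnerProductSpace.toDual ℝ H).symm.toContinuousLinearEquiv.toContinuousLinearMap :
        (H →L[ℝ] ℝ) →L[ℝ] H))
    have h3 : (Cop : H → H)
        = (((InnerProductSpace.toDual ℝ H).symm.toContinuousLinearEquiv.toContinuousLinearMap :
        (H →L[ℝ] ℝ) →L[ℝ] H)) ∘ ((K : H → (H →L[ℝ] ℝ)) ∘ (Ξ.symm : H →L[ℝ] H)) := rfl
    rw [h3]
    exact h2
  obtain ⟨A₀, hA₀⟩ : ∃ A₀ : H ≃L[ℝ] H, ∀ v w : H, ⟪A₀ v, w⟫ = W v w := by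
    obtain hco | hco := hdich
    · exact ⟨hco.continuousLinearEquivOfBilin, fun v w =>
        hco.continuousLinearEquivOfBilin_apply v w⟩
    · refine ⟨hco.continuousLinearEquivOfBilin.trans (ContinuousLinearEquiv.neg ℝ), fun v w => ?_⟩
      have h1 := hco.continuousLinearEquivOfBilin_apply v w
      have h2 : (-W) v w = -(W v w) := rfl
      rw [ContinuousLinearEquiv.trans_apply]
      have h3 : (ContinuousLinearEquiv.neg ℝ (hco.continuousLinearEquivOfBilin v) : H)
          = -(hco.continuousLinearEquivOfBilin v) := rfl
      rw [h3, inner_neg_left, h1, h2, neg_neg]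
  set A' : H ≃L[ℝ] H := Ξ.symm.trans A₀ with hA'
  have hdecomp : ∀ a : H, T' a = A' a - Cop a := by
    intro a
    apply ext_inner_right ℝ
    intro w
    rw [inner_sub_left, hT'app, hCopapp]
    have h2 : (⟪A' a, w⟫ : ℝ) = W (Ξ.symm a) w := hA₀ _ w
    rw [h2, hWapp]
    simp [Ξ.apply_symm_apply]
  obtain ⟨hker, hclosed⟩ := aux_fredholm T' A' Cop hCopc hdecomp
  -- relation between B and T'
  have hBJ : ∀ x : H, B x = J (T' x) := by
    intro x
    apply ContinuousLinearMap.ext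
    intro w
    have h1 : (J (T' x)) w = ⟪T' x, w⟫ := InnerProductSpace.toDual_apply_apply
    rw [h1, hT'app]
  have hkerEq : LinearMap.ker (B : H →ₗ[ℝ] (H →L[ℝ] ℝ)) = LinearMap.ker (T' : H →ₗ[ℝ] H) := by
    ext x
    simp only [LinearMap.mem_ker, ContinuousLinearMap.coe_coe]
    constructor
    · intro h
      have := hBJ x
      rw [h] at this
      have h0 : J (T' x) = J 0 := by rw [← this, map_zero]
      exact J.injective h0
    · intro h
      rw [hBJ x, h, map_zero]
  have hrangeSet : Set.range (B : H → (H →L[ℝ] ℝ)) = J '' Set.range (T' : H → H) := by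
    ext y
    constructor
    · rintro ⟨x, rfl⟩
      exact ⟨T' x, ⟨x, rfl⟩, (hBJ x).symm⟩
    · rintro ⟨z, ⟨x, rfl⟩, rfl⟩
      exact ⟨x, hBJ x⟩
  set p : Submodule ℝ H := LinearMap.range (T' : H →ₗ[ℝ] H) with hp
  have hpclosed : IsClosed (p : Set H) := by
    have : (p : Set H) = Set.range (T' : H → H) := by
      ext x
      simp [hp, LinearMap.mem_range]
    rw [this]
    exact hclosed
  haveI : CompleteSpace p := hpclosed.completeSpace_coe
  have hcompl : IsCompl p pᗮ := Submodule.isCompl_orthogonal_of_hasOrthogonalProjection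
  have hsymT' : ∀ y x : H, ⟪T' y, x⟫ = ⟪y, T' x⟫ := by
    intro y x
    rw [hT'app, real_inner_comm, hT'app, hsymm]
  have horth : pᗮ = LinearMap.ker (T' : H →ₗ[ℝ] H) := by
    ext x
    rw [Submodule.mem_orthogonal]
    simp only [LinearMap.mem_ker, ContinuousLinearMap.coe_coe]
    constructor
    · intro hx
      have h1 : (⟪T' (T' x), x⟫ : ℝ) = 0 := hx (T' (T' x)) ⟨T' x, rfl⟩
      rw [hsymT'] at h1
      exact inner_self_eq_zero.mp h1
    · intro hx u hu
      obtain ⟨y, rfl⟩ := hu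
      have : (T' : H →ₗ[ℝ] H) y = T' y := rfl
      rw [this, hsymT', hx, inner_zero_right]
  -- quotient equivalences
  let Jl : H ≃ₗ[ℝ] (H →L[ℝ] ℝ) := J.toLinearEquiv
  have hJl : ∀ x : H, Jl x = J x := fun x => rfl
  have hmap : (LinearMap.range (T' : H →ₗ[ℝ] H)).map (Jl : H →ₗ[ℝ] (H →L[ℝ] ℝ))
      = LinearMap.range (B : H →ₗ[ℝ] (H →L[ℝ] ℝ)) := by
    ext f
    simp only [Submodule.mem_map, LinearMap.mem_range, ContinuousLinearMap.coe_coe]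
    constructor
    · rintro ⟨y, ⟨x, rfl⟩, rfl⟩
      exact ⟨x, show B x = J (T' x) from hBJ x⟩
    · rintro ⟨x, rfl⟩
      exact ⟨T' x, ⟨x, rfl⟩, show J (T' x) = B x from (hBJ x).symm⟩
  have e1 : (H ⧸ p) ≃ₗ[ℝ] ((H →L[ℝ] ℝ) ⧸ LinearMap.range (B : H →ₗ[ℝ] (H →L[ℝ] ℝ))) :=
    Submodule.Quotient.equiv p (LinearMap.range (B : H →ₗ[ℝ] (H →L[ℝ] ℝ))) Jl hmap
  have e2 : (H ⧸ p) ≃ₗ[ℝ] pᗮ := Submodule.quotientEquivOfIsCompl p pᗮ hcompl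
  haveI hkfd : FiniteDimensional ℝ (LinearMap.ker (T' : H →ₗ[ℝ] H)) := hker
  haveI horthfd : FiniteDimensional ℝ pᗮ := by rw [horth]; exact hkfd
  haveI hqfd : FiniteDimensional ℝ (H ⧸ p) := Module.Finite.equiv e2.symm
  refine ⟨?_, ?_, ?_, ?_⟩
  · rw [hkerEq]; exact hker
  · rw [hrangeSet]
    exact (J.toHomeomorph.isClosedMap) _ hclosed
  · exact Module.Finite.equiv e1
  · rw [hkerEq]
    calc Module.finrank ℝ (LinearMap.ker (T' : H →ₗ[ℝ] H))
        = Module.finrank ℝ pᗮ := by rw [horth]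
      _ = Module.finrank ℝ (H ⧸ p) := (e2.finrank_eq).symm
      _ = Module.finrank ℝ ((H →L[ℝ] ℝ) ⧸ LinearMap.range (B : H →ₗ[ℝ] (H →L[ℝ] ℝ))) :=
          e1.finrank_eq
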